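/- Under the connected sum G #_{e,f} K along same-colored edges e, f of color c, the number of faces satisfies |(G #_{e,f} K)^(2)| = |G^(2)| + |K^(2)| - D: for each of the D colors d ≠ c, the (c,d)-bicolored cycle through e and the (c,d)-bicolored cycle through f merge into a single bicolored cycle, and all other faces are unaffected. -/

import Mathlib

open scoped Classical

structure PreGraph (D : ℕ) where
  W : Type
  B : Type
  E : Type
  [finW : Finite W]
  [finB : Finite B]
  [finE : Finite E]
  src : E → W
  tgt : E → B
  col : E → Fin D

attribute [instance] PreGraph.finW PreGraph.finB PreGraph.finE

namespace PreGraph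

variable {D : ℕ}

/-- A regularly edge-colored bipartite graph: at every white (resp. black) vertex
there is exactly one incident edge of each of the `D` colors. -/
def Regular (G : PreGraph D) : Prop :=
  (∀ w c, ∃! e, G.src e = w ∧ G.col e = c) ∧
  (∀ b c, ∃! e, G.tgt e = b ∧ G.col e = c)

/-- The simple graph on all the vertices of `G` whose edges are the edges of `G`
with color in `S`. -/
def adjOn (G : PreGraph D) (S : Set (Fin D)) : SimpleGraph (G.W ⊕ G.B) where
  Adj v w := ∃ e, G.col e ∈ S ∧
    ((v = Sum.inl (G.src e) ∧ w = Sum.inr (G.tgt e)) ∨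
     (w = Sum.inl (G.src e) ∧ v = Sum.inr (G.tgt e)))
  symm := by
    constructor
    rintro v w ⟨e, hc, h⟩
    exact ⟨e, hc, h.symm⟩
  loopless := by
    constructor
    rintro v ⟨e, hc, (⟨h1, h2⟩ | ⟨h1, h2⟩)⟩ <;> rw [h1] at h2 <;> exact Sum.inl_ne_inr h2

def Connected (G : PreGraph D) : Prop := (G.adjOn Set.univ).Connected

/-- The number of faces (connected components of the `{i,j}`-bicolored subgraph). -/
noncomputable def facesCount (G : PreGraph D) (i j : Fin D) : ℕ :=
  Nat.card ((G.adjOn {i, j}).ConnectedComponent)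

/-- The total number of faces of `G` (over all unordered pairs of colors). -/
noncomputable def totalFaces (G : PreGraph D) : ℕ :=
  ∑ p ∈ Finset.univ.filter (fun p : Fin D × Fin D => p.1 < p.2), G.facesCount p.1 p.2

/-- Number of faces of the jacket associated to a cyclic permutation `σ` of the colors:
the faces of colors `σ^q(0), σ^{q+1}(0)`. -/
noncomputable def jacketFaces (G : PreGraph (D+1)) (σ : Equiv.Perm (Fin (D+1))) : ℕ :=
  ∑ q ∈ Finset.range (D+1), G.facesCount ((σ ^ q) 0) ((σ ^ (q+1)) 0)

/-- The genus of the jacket ribbon graph associated to `σ`, via Euler's formula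
`2 - 2g = V - E + F`. -/
noncomputable def jacketGenus (G : PreGraph (D+1)) (σ : Equiv.Perm (Fin (D+1))) : ℚ :=
  (2 - ((Nat.card G.W : ℚ) + (Nat.card G.B : ℚ)) + (Nat.card G.E : ℚ)
      - (G.jacketFaces σ : ℚ)) / 2

/-- Gurău's degree: the sum of the genera of the `D!/2` jackets of `G`; each jacket
corresponds to a pair `σ, σ⁻¹` of cyclic permutations of the `D+1` colors, whence the
factor `1/2`. -/
noncomputable def gurauDegree (G : PreGraph (D+1)) : ℚ :=
  (1/2) * ∑ σ ∈ Finset.univ.filter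
      (fun σ : Equiv.Perm (Fin (D+1)) => σ.IsCycle ∧ σ.support = Finset.univ),
    G.jacketGenus σ

end PreGraph

/-- The connected sum `G #_{e,f} K`: delete `e` and `f` and add two new edges
`E = (s(e), t(f))` (coded `true`) and `F = (s(f), t(e))` (coded `false`), both of the
color of `e`. -/
noncomputable def connSum {D : ℕ} (G K : PreGraph D) (e : G.E) (f : K.E) :
    PreGraph D where
  W := G.W ⊕ K.W
  B := G.B ⊕ K.B
  E := {e' : G.E // e' ≠ e} ⊕ ({f' : K.E // f' ≠ f} ⊕ Bool)
  src := fun x => match x with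
    | .inl e' => .inl (G.src e'.1)
    | .inr (.inl f') => .inr (K.src f'.1)
    | .inr (.inr true) => .inl (G.src e)
    | .inr (.inr false) => .inr (K.src f)
  tgt := fun x => match x with
    | .inl e' => .inl (G.tgt e'.1)
    | .inr (.inl f') => .inr (K.tgt f'.1)
    | .inr (.inr true) => .inr (K.tgt f)
    | .inr (.inr false) => .inl (G.tgt e)
  col := fun x => match x with
    | .inl e' => G.col e'.1
    | .inr (.inl f') => K.col f'.1
    | .inr (.inr _) => G.col e

section Aux

open SimpleGraph

variable {D : ℕ}

/-- A function invariant under adjacency is invariant under reachability. -/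
lemma ccInvariant {V : Type} {β : Sort*} {G : SimpleGraph V} {f : V → β}
    (h : ∀ v w, G.Adj v w → f v = f w) : ∀ {u v : V}, G.Reachable u v → f u = f v := by
  intro u v hr
  obtain ⟨p⟩ := hr
  induction p with
  | nil => rfl
  | cons ha _ ih => exact (h _ _ ha).trans ih

/-- Lift a function invariant under adjacency to connected components. -/
def ccLift {V : Type} {β : Sort*} (G : SimpleGraph V) (f : V → β)
    (h : ∀ v w, G.Adj v w → f v = f w) : G.ConnectedComponent → β :=
  Quot.lift f fun _ _ hr => ccInvariant h hr

@[simp] lemma ccLift_mk {V : Type} {β : Sort*} (G : SimpleGraph V) (f : V → β)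
    (h : ∀ v w, G.Adj v w → f v = f w) (v : V) :
    ccLift G f h (G.connectedComponentMk v) = f v := rfl

/-- Abstract counting lemma: if `C` is obtained from `A ⊕ B` by merging exactly the two
points `a0` and `b0`, then `|C| + 1 = |A| + |B|`. -/
lemma card_merge {A B C : Type} [Finite A] [Finite B] (a0 : A) (b0 : B)
    (Φ : A ⊕ B → C) (Ψ : C → A ⊕ B)
    (hΨΦ : ∀ x, Ψ (Φ x) = if x = Sum.inr b0 then Sum.inl a0 else x)
    (hmerge : Φ (Sum.inl a0) = Φ (Sum.inr b0))
    (hsurj : Function.Surjective Φ) :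
    Nat.card C + 1 = Nat.card A + Nat.card B := by
  classical
  have hΦΨ : ∀ c, Φ (Ψ c) = c := by
    intro c
    obtain ⟨x, rfl⟩ := hsurj c
    rw [hΨΦ]
    split_ifs with h
    · rw [h, hmerge]
    · rfl
  have hne : ∀ c, Ψ c ≠ Sum.inr b0 := by
    intro c hc
    obtain ⟨x, rfl⟩ := hsurj c
    rw [hΨΦ] at hc
    by_cases h : x = Sum.inr b0
    · rw [if_pos h] at hc
      exact Sum.inl_ne_inr hc
    · rw [if_neg h] at hc
      exact h hc
  let E : C ≃ {z : A ⊕ B // z ≠ Sum.inr b0} :=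
    { toFun := fun c => ⟨Ψ c, hne c⟩
      invFun := fun z => Φ z.1
      left_inv := fun c => hΦΨ c
      right_inv := fun z => by
        apply Subtype.ext
        show Ψ (Φ z.1) = z.1
        rw [hΨΦ, if_neg z.2] }
  have hsum : Nat.card A + Nat.card B = Nat.card (A ⊕ B) := (Nat.card_sum).symm
  have hdec : Nat.card (A ⊕ B) =
      Nat.card {z : A ⊕ B // z = Sum.inr b0} + Nat.card {z : A ⊕ B // z ≠ Sum.inr b0} := by
    rw [← Nat.card_sum]
    exact Nat.card_congr (Equiv.sumCompl (fun z : A ⊕ B => z = Sum.inr b0)).symm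
  haveI : Unique {z : A ⊕ B // z = Sum.inr b0} :=
    ⟨⟨⟨Sum.inr b0, rfl⟩⟩, by rintro ⟨z, rfl⟩; rfl⟩
  have h1 : Nat.card {z : A ⊕ B // z = Sum.inr b0} = 1 := Nat.card_unique
  have h2 : Nat.card C = Nat.card {z : A ⊕ B // z ≠ Sum.inr b0} := Nat.card_congr E
  rw [hsum, hdec, h1, h2]
  omega

/-- Abstract counting lemma: a bijection between `C` and `A ⊕ B` splits the count. -/
lemma card_split {A B C : Type} [Finite A] [Finite B] (Φ : A ⊕ B → C) (Ψ : C → A ⊕ B)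
    (h1 : ∀ x, Ψ (Φ x) = x) (h2 : ∀ c, Φ (Ψ c) = c) :
    Nat.card C = Nat.card A + Nat.card B := by
  rw [← Nat.card_sum]
  exact Nat.card_congr ⟨Ψ, Φ, h2, h1⟩

namespace PreGraph

/-- The unique edge of color `c` at a white vertex `w`. -/
noncomputable def eW (G : PreGraph D) (hG : G.Regular) (w : G.W) (c : Fin D) : G.E :=
  (hG.1 w c).choose

lemma eW_src (G : PreGraph D) (hG : G.Regular) (w : G.W) (c : Fin D) :
    G.src (G.eW hG w c) = w := (hG.1 w c).choose_spec.1.1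

lemma eW_col (G : PreGraph D) (hG : G.Regular) (w : G.W) (c : Fin D) :
    G.col (G.eW hG w c) = c := (hG.1 w c).choose_spec.1.2

lemma eW_eq (G : PreGraph D) (hG : G.Regular) {w : G.W} {c : Fin D} {e' : G.E}
    (h1 : G.src e' = w) (h2 : G.col e' = c) : e' = G.eW hG w c :=
  (hG.1 w c).choose_spec.2 e' ⟨h1, h2⟩

/-- The unique edge of color `c` at a black vertex `b`. -/
noncomputable def eB (G : PreGraph D) (hG : G.Regular) (b : G.B) (c : Fin D) : G.E :=
  (hG.2 b c).choose

lemma eB_tgt (G : PreGraph D) (hG : G.Regular) (b : G.B) (c : Fin D) :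
    G.tgt (G.eB hG b c) = b := (hG.2 b c).choose_spec.1.1

lemma eB_col (G : PreGraph D) (hG : G.Regular) (b : G.B) (c : Fin D) :
    G.col (G.eB hG b c) = c := (hG.2 b c).choose_spec.1.2

lemma eB_eq (G : PreGraph D) (hG : G.Regular) {b : G.B} {c : Fin D} {e' : G.E}
    (h1 : G.tgt e' = b) (h2 : G.col e' = c) : e' = G.eB hG b c :=
  (hG.2 b c).choose_spec.2 e' ⟨h1, h2⟩

/-- The graph of edges with colors in `S`, with the edge `f0` removed. -/
def adjOnNe (G : PreGraph D) (S : Set (Fin D)) (f0 : G.E) : SimpleGraph (G.W ⊕ G.B) where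
  Adj v w := ∃ e, e ≠ f0 ∧ G.col e ∈ S ∧
    ((v = Sum.inl (G.src e) ∧ w = Sum.inr (G.tgt e)) ∨
     (w = Sum.inl (G.src e) ∧ v = Sum.inr (G.tgt e)))
  symm := by
    constructor
    rintro v w ⟨e, hne, hc, h⟩
    exact ⟨e, hne, hc, h.symm⟩
  loopless := by
    constructor
    rintro v ⟨e, hne, hc, (⟨h1, h2⟩ | ⟨h1, h2⟩)⟩ <;> rw [h1] at h2 <;> exact Sum.inl_ne_inr h2

/-- The step of the `(c,d)`-bicolored walk at white vertices: follow the `c`-edge,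
then follow back the `d`-edge. -/
noncomputable def stepW (G : PreGraph D) (hG : G.Regular) (c d : Fin D) : G.W → G.W :=
  fun w => G.src (G.eB hG (G.tgt (G.eW hG w c)) d)

lemma stepW_injective (G : PreGraph D) (hG : G.Regular) (c d : Fin D) :
    Function.Injective (G.stepW hG c d) := by
  intro w w' h
  have h1 : G.eB hG (G.tgt (G.eW hG w c)) d = G.eW hG (G.stepW hG c d w) d :=
    G.eW_eq hG rfl (G.eB_col hG _ d)
  have h2 : G.eB hG (G.tgt (G.eW hG w' c)) d = G.eW hG (G.stepW hG c d w) d := by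
    refine G.eW_eq hG ?_ (G.eB_col hG _ d)
    exact h.symm
  have h3 : G.tgt (G.eW hG w c) = G.tgt (G.eW hG w' c) := by
    conv_lhs => rw [← G.eB_tgt hG (G.tgt (G.eW hG w c)) d]
    conv_rhs => rw [← G.eB_tgt hG (G.tgt (G.eW hG w' c)) d]
    rw [h1, h2]
  have h4 : G.eW hG w c = G.eB hG (G.tgt (G.eW hG w c)) c :=
    G.eB_eq hG rfl (G.eW_col hG w c)
  have h5 : G.eW hG w' c = G.eB hG (G.tgt (G.eW hG w c)) c :=
    G.eB_eq hG h3.symm (G.eW_col hG w' c)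
  rw [← G.eW_src hG w c, ← G.eW_src hG w' c, h4, h5]

/-- The "no bridge" lemma: after deleting the edge `f0` from the `{c,d}`-bicolored
subgraph of a regular graph, the two endpoints of `f0` are still connected
(going around the bicolored cycle through `f0`). -/
lemma reachable_adjOnNe (G : PreGraph D) (hG : G.Regular) (f0 : G.E) {c d : Fin D}
    (hc : G.col f0 = c) (hd : d ≠ c) :
    (G.adjOnNe {c, d} f0).Reachable (Sum.inr (G.tgt f0)) (Sum.inl (G.src f0)) := by
  classical
  have adjB : ∀ b : G.B, (G.adjOnNe {c, d} f0).Adj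
      (Sum.inl (G.src (G.eB hG b d))) (Sum.inr b) := by
    intro b
    refine ⟨G.eB hG b d, ?_, ?_, Or.inl ⟨rfl, ?_⟩⟩
    · intro h
      exact hd (by rw [← G.eB_col hG b d, h, hc])
    · rw [G.eB_col hG b d]
      exact Set.mem_insert_of_mem _ rfl
    · exact congrArg Sum.inr (G.eB_tgt hG b d).symm
  have adjW : ∀ w : G.W, w ≠ G.src f0 → (G.adjOnNe {c, d} f0).Adj
      (Sum.inl w) (Sum.inr (G.tgt (G.eW hG w c))) := by
    intro w hw
    refine ⟨G.eW hG w c, ?_, ?_, Or.inl ⟨?_, rfl⟩⟩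
    · intro h
      exact hw (by rw [← G.eW_src hG w c, h])
    · rw [G.eW_col hG w c]
      exact Set.mem_insert _ _
    · exact congrArg Sum.inl (G.eW_src hG w c).symm
  have hb : G.tgt (G.eW hG (G.src f0) c) = G.tgt f0 := by
    rw [← G.eW_eq hG (e' := f0) rfl hc]
  have base : (G.adjOnNe {c, d} f0).Reachable (Sum.inr (G.tgt f0))
      (Sum.inl (G.stepW hG c d (G.src f0))) := by
    have h := ((adjB (G.tgt f0)).symm).reachable
    show (G.adjOnNe {c, d} f0).Reachable (Sum.inr (G.tgt f0))
      (Sum.inl (G.src (G.eB hG (G.tgt (G.eW hG (G.src f0) c)) d)))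
    rw [hb]
    exact h
  have main : ∀ n, 1 ≤ n → (G.adjOnNe {c, d} f0).Reachable (Sum.inr (G.tgt f0))
      (Sum.inl ((G.stepW hG c d)^[n] (G.src f0))) := by
    intro n hn
    induction n, hn using Nat.le_induction with
    | base => simpa using base
    | succ n hn ih =>
      rw [Function.iterate_succ_apply']
      by_cases hw : (G.stepW hG c d)^[n] (G.src f0) = G.src f0
      · rw [hw]; exact base
      · refine ih.trans ?_
        refine ((adjW _ hw).reachable).trans ?_
        exact ((adjB (G.tgt (G.eW hG ((G.stepW hG c d)^[n] (G.src f0)) c))).symm).reachable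
  let σ : Equiv.Perm G.W := Equiv.ofBijective (G.stepW hG c d)
    ((Finite.injective_iff_bijective).mp (G.stepW_injective hG c d))
  have hfix : (G.stepW hG c d)^[orderOf σ] (G.src f0) = G.src f0 := by
    have h1 : (σ ^ orderOf σ) (G.src f0) = G.src f0 := by
      rw [pow_orderOf_eq_one]; rfl
    rwa [Equiv.Perm.coe_pow] at h1
  have h := main (orderOf σ) (orderOf_pos σ)
  rwa [hfix] at h

end PreGraph

open PreGraph

variable {G K : PreGraph D}

/-- Inclusion of the vertices of `G` into the vertices of the connected sum. -/
def iotaG (K : PreGraph D) : (G.W ⊕ G.B) → ((G.W ⊕ K.W) ⊕ (G.B ⊕ K.B))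
  | .inl w => .inl (.inl w)
  | .inr b => .inr (.inl b)

/-- Inclusion of the vertices of `K` into the vertices of the connected sum. -/
def iotaK (G : PreGraph D) : (K.W ⊕ K.B) → ((G.W ⊕ K.W) ⊕ (G.B ⊕ K.B))
  | .inl w => .inl (.inr w)
  | .inr b => .inr (.inr b)

/-- Projection of a vertex of the connected sum to the pair of component types. -/
def proj0 (G K : PreGraph D) (S : Set (Fin D)) :
    ((G.W ⊕ K.W) ⊕ (G.B ⊕ K.B)) →
      (G.adjOn S).ConnectedComponent ⊕ (K.adjOn S).ConnectedComponent
  | .inl (.inl w) => .inl ((G.adjOn S).connectedComponentMk (.inl w))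
  | .inl (.inr w) => .inr ((K.adjOn S).connectedComponentMk (.inl w))
  | .inr (.inl b) => .inl ((G.adjOn S).connectedComponentMk (.inr b))
  | .inr (.inr b) => .inr ((K.adjOn S).connectedComponentMk (.inr b))

lemma adj_iotaG (e : G.E) (f : K.E) (S : Set (Fin D)) {e' : G.E} (hne : e' ≠ e)
    (hcS : G.col e' ∈ S) :
    ((connSum G K e f).adjOn S).Adj (iotaG K (.inl (G.src e'))) (iotaG K (.inr (G.tgt e'))) :=
  ⟨Sum.inl ⟨e', hne⟩, hcS, Or.inl ⟨rfl, rfl⟩⟩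

lemma adj_iotaK (e : G.E) (f : K.E) (S : Set (Fin D)) {f' : K.E} (hne : f' ≠ f)
    (hcS : K.col f' ∈ S) :
    ((connSum G K e f).adjOn S).Adj (iotaK G (.inl (K.src f'))) (iotaK G (.inr (K.tgt f'))) :=
  ⟨Sum.inr (Sum.inl ⟨f', hne⟩), hcS, Or.inl ⟨rfl, rfl⟩⟩

lemma adj_new_true (e : G.E) (f : K.E) (S : Set (Fin D)) (hcS : G.col e ∈ S) :
    ((connSum G K e f).adjOn S).Adj (iotaG K (.inl (G.src e))) (iotaK G (.inr (K.tgt f))) :=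
  ⟨Sum.inr (Sum.inr true), hcS, Or.inl ⟨rfl, rfl⟩⟩

lemma adj_new_false (e : G.E) (f : K.E) (S : Set (Fin D)) (hcS : G.col e ∈ S) :
    ((connSum G K e f).adjOn S).Adj (iotaK G (.inl (K.src f))) (iotaG K (.inr (G.tgt e))) :=
  ⟨Sum.inr (Sum.inr false), hcS, Or.inl ⟨rfl, rfl⟩⟩

/-- The graph homomorphism from `G` minus `e` into the connected sum. -/
def homG (e : G.E) (f : K.E) (S : Set (Fin D)) :
    G.adjOnNe S e →g (connSum G K e f).adjOn S where
  toFun := iotaG K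
  map_rel' := by
    rintro u v ⟨e', hne, hcS, (⟨rfl, rfl⟩ | ⟨rfl, rfl⟩)⟩
    · exact adj_iotaG e f S hne hcS
    · exact (adj_iotaG e f S hne hcS).symm

/-- The graph homomorphism from `K` minus `f` into the connected sum. -/
def homK (e : G.E) (f : K.E) (S : Set (Fin D)) :
    K.adjOnNe S f →g (connSum G K e f).adjOn S where
  toFun := iotaK G
  map_rel' := by
    rintro u v ⟨f', hne, hcS, (⟨rfl, rfl⟩ | ⟨rfl, rfl⟩)⟩
    · exact adj_iotaK e f S hne hcS
    · exact (adj_iotaK e f S hne hcS).symm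

end Aux

section Main

open SimpleGraph PreGraph

variable {D : ℕ}

lemma PreGraph.facesCount_comm (G : PreGraph D) (i j : Fin D) :
    G.facesCount i j = G.facesCount j i := by
  unfold PreGraph.facesCount
  rw [Set.pair_comm]

/-- The `(c,d)`-faces through `e` and `f` merge; all other `(c,d)`-faces survive. -/
lemma connSum_facesCount_mem (G K : PreGraph D) (hGreg : G.Regular) (hKreg : K.Regular)
    (e : G.E) (f : K.E) {c d : Fin D} (hce : G.col e = c) (hcf : K.col f = c) (hd : d ≠ c) :
    (connSum G K e f).facesCount c d + 1 = G.facesCount c d + K.facesCount c d := by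
  classical
  simp only [PreGraph.facesCount]
  set S : Set (Fin D) := {c, d} with hS
  have hcS : c ∈ S := Set.mem_insert _ _
  have heS : G.col e ∈ S := by rw [hce]; exact hcS
  have hfS : K.col f ∈ S := by rw [hcf]; exact hcS
  set H := (connSum G K e f).adjOn S with hH
  set H1 := G.adjOn S with hH1
  set H2 := K.adjOn S with hH2
  set ce := H1.connectedComponentMk (Sum.inl (G.src e)) with hce'
  set cf := H2.connectedComponentMk (Sum.inr (K.tgt f)) with hcf'
  -- the endpoints of `e` (resp. `f`) are connected inside the connected sum,
  -- going through the other graph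
  have hGe : H.Reachable (iotaG K (.inl (G.src e))) (iotaG K (.inr (G.tgt e))) :=
    (adj_new_true e f S heS).reachable.trans
      (((K.reachable_adjOnNe hKreg f hcf hd).map (homK e f S)).trans
        (adj_new_false e f S heS).reachable)
  have hKf : H.Reachable (iotaK G (.inl (K.src f))) (iotaK G (.inr (K.tgt f))) :=
    (adj_new_false e f S heS).reachable.trans
      (((G.reachable_adjOnNe hGreg e hce hd).map (homG e f S)).trans
        (adj_new_true e f S heS).reachable)
  have hGadj : ∀ u v, H1.Adj u v →
      H.connectedComponentMk (iotaG K u) = H.connectedComponentMk (iotaG K v) := by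
    have key : ∀ e' : G.E, G.col e' ∈ S →
        H.connectedComponentMk (iotaG K (.inl (G.src e'))) =
          H.connectedComponentMk (iotaG K (.inr (G.tgt e'))) := by
      intro e' hcS'
      by_cases hne : e' = e
      · subst hne
        exact SimpleGraph.ConnectedComponent.sound hGe
      · exact SimpleGraph.ConnectedComponent.sound (adj_iotaG e f S hne hcS').reachable
    rintro u v ⟨e', hcS', (⟨rfl, rfl⟩ | ⟨rfl, rfl⟩)⟩
    · exact key e' hcS'
    · exact (key e' hcS').symm
  have hKadj : ∀ u v, H2.Adj u v →
      H.connectedComponentMk (iotaK G u) = H.connectedComponentMk (iotaK G v) := by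
    have key : ∀ f' : K.E, K.col f' ∈ S →
        H.connectedComponentMk (iotaK G (.inl (K.src f'))) =
          H.connectedComponentMk (iotaK G (.inr (K.tgt f'))) := by
      intro f' hnf'
      by_cases hnf : f' = f
      · subst hnf
        exact SimpleGraph.ConnectedComponent.sound hKf
      · exact SimpleGraph.ConnectedComponent.sound (adj_iotaK e f S hnf hnf').reachable
    rintro u v ⟨f', hcS', (⟨rfl, rfl⟩ | ⟨rfl, rfl⟩)⟩
    · exact key f' hcS'
    · exact (key f' hcS').symm
  have hψinv : ∀ u v, H.Adj u v →
      (if proj0 G K S u = Sum.inr cf then Sum.inl ce else proj0 G K S u) =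
      (if proj0 G K S v = Sum.inr cf then Sum.inl ce else proj0 G K S v) := by
    have key : ∀ x : (connSum G K e f).E, (connSum G K e f).col x ∈ S →
        (if proj0 G K S (Sum.inl ((connSum G K e f).src x)) = Sum.inr cf then Sum.inl ce
          else proj0 G K S (Sum.inl ((connSum G K e f).src x))) =
        (if proj0 G K S (Sum.inr ((connSum G K e f).tgt x)) = Sum.inr cf then Sum.inl ce
          else proj0 G K S (Sum.inr ((connSum G K e f).tgt x))) := by
      rintro (⟨e', hne⟩ | (⟨f', hnf⟩ | b)) hxc
      · have h1 : proj0 G K S (Sum.inl ((connSum G K e f).src (Sum.inl ⟨e', hne⟩))) =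
            Sum.inl (H1.connectedComponentMk (Sum.inl (G.src e'))) := rfl
        have h2 : proj0 G K S (Sum.inr ((connSum G K e f).tgt (Sum.inl ⟨e', hne⟩))) =
            Sum.inl (H1.connectedComponentMk (Sum.inr (G.tgt e'))) := rfl
        rw [h1, h2, SimpleGraph.ConnectedComponent.sound
          (SimpleGraph.Adj.reachable
            (⟨e', hxc, Or.inl ⟨rfl, rfl⟩⟩ :
              H1.Adj (Sum.inl (G.src e')) (Sum.inr (G.tgt e'))))]
      · have h1 : proj0 G K S (Sum.inl ((connSum G K e f).src (Sum.inr (Sum.inl ⟨f', hnf⟩)))) =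
            Sum.inr (H2.connectedComponentMk (Sum.inl (K.src f'))) := rfl
        have h2 : proj0 G K S (Sum.inr ((connSum G K e f).tgt (Sum.inr (Sum.inl ⟨f', hnf⟩)))) =
            Sum.inr (H2.connectedComponentMk (Sum.inr (K.tgt f'))) := rfl
        rw [h1, h2, SimpleGraph.ConnectedComponent.sound
          (SimpleGraph.Adj.reachable
            (⟨f', hxc, Or.inl ⟨rfl, rfl⟩⟩ :
              H2.Adj (Sum.inl (K.src f')) (Sum.inr (K.tgt f'))))]
      · cases b
        · -- the new edge `false`, from `src f` to `tgt e`
          have h1 : proj0 G K S (Sum.inl ((connSum G K e f).src (Sum.inr (Sum.inr false)))) =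
              Sum.inr (H2.connectedComponentMk (Sum.inl (K.src f))) := rfl
          have h2 : proj0 G K S (Sum.inr ((connSum G K e f).tgt (Sum.inr (Sum.inr false)))) =
              Sum.inl (H1.connectedComponentMk (Sum.inr (G.tgt e))) := rfl
          have hf2 : H2.connectedComponentMk (Sum.inl (K.src f)) = cf :=
            SimpleGraph.ConnectedComponent.sound
              (SimpleGraph.Adj.reachable
                (⟨f, hfS, Or.inl ⟨rfl, rfl⟩⟩ :
                  H2.Adj (Sum.inl (K.src f)) (Sum.inr (K.tgt f))))
          have he2 : H1.connectedComponentMk (Sum.inr (G.tgt e)) = ce :=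
            (SimpleGraph.ConnectedComponent.sound
              (SimpleGraph.Adj.reachable
                (⟨e, heS, Or.inl ⟨rfl, rfl⟩⟩ :
                  H1.Adj (Sum.inl (G.src e)) (Sum.inr (G.tgt e))))).symm
          rw [h1, h2, hf2, he2]
          simp
        · -- the new edge `true`, from `src e` to `tgt f`
          have h1 : proj0 G K S (Sum.inl ((connSum G K e f).src (Sum.inr (Sum.inr true)))) =
              Sum.inl ce := rfl
          have h2 : proj0 G K S (Sum.inr ((connSum G K e f).tgt (Sum.inr (Sum.inr true)))) =
              Sum.inr cf := rfl
          rw [h1, h2]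
          simp
    rintro u v ⟨x, hxc, (⟨rfl, rfl⟩ | ⟨rfl, rfl⟩)⟩
    · exact key x hxc
    · exact (key x hxc).symm
  refine card_merge ce cf
    (Sum.elim (ccLift H1 (fun v => H.connectedComponentMk (iotaG K v)) hGadj)
      (ccLift H2 (fun v => H.connectedComponentMk (iotaK G v)) hKadj))
    (ccLift H
      (fun v => if proj0 G K S v = Sum.inr cf then Sum.inl ce else proj0 G K S v) hψinv)
    ?_ ?_ ?_
  · rintro (x | x)
    · induction x using SimpleGraph.ConnectedComponent.ind with
      | _ v => cases v <;> rfl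
    · induction x using SimpleGraph.ConnectedComponent.ind with
      | _ v => cases v <;> rfl
  · exact SimpleGraph.ConnectedComponent.sound (adj_new_true e f S heS).reachable
  · intro cc
    induction cc using SimpleGraph.ConnectedComponent.ind with
    | _ v =>
      rcases v with (w | w) | (b | b)
      · exact ⟨Sum.inl (H1.connectedComponentMk (Sum.inl w)), rfl⟩
      · exact ⟨Sum.inr (H2.connectedComponentMk (Sum.inl w)), rfl⟩
      · exact ⟨Sum.inl (H1.connectedComponentMk (Sum.inr b)), rfl⟩
      · exact ⟨Sum.inr (H2.connectedComponentMk (Sum.inr b)), rfl⟩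

/-- Faces whose pair of colors does not involve the color of the glued edges
are unaffected by the connected sum. -/
lemma connSum_facesCount_not_mem (G K : PreGraph D) (e : G.E) (f : K.E) {c i j : Fin D}
    (hce : G.col e = c) (hcf : K.col f = c) (hi : i ≠ c) (hj : j ≠ c) :
    (connSum G K e f).facesCount i j = G.facesCount i j + K.facesCount i j := by
  classical
  simp only [PreGraph.facesCount]
  set S : Set (Fin D) := {i, j} with hS
  have hcnS : c ∉ S := by
    simp only [hS, Set.mem_insert_iff, Set.mem_singleton_iff]
    rintro (rfl | rfl)
    · exact hi rfl
    · exact hj rfl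
  set H := (connSum G K e f).adjOn S with hH
  set H1 := G.adjOn S with hH1
  set H2 := K.adjOn S with hH2
  have hGadj : ∀ u v, H1.Adj u v →
      H.connectedComponentMk (iotaG K u) = H.connectedComponentMk (iotaG K v) := by
    have key : ∀ e' : G.E, G.col e' ∈ S →
        H.connectedComponentMk (iotaG K (.inl (G.src e'))) =
          H.connectedComponentMk (iotaG K (.inr (G.tgt e'))) := by
      intro e' hcS'
      have hne : e' ≠ e := by
        intro h
        rw [h, hce] at hcS'
        exact hcnS hcS'
      exact SimpleGraph.ConnectedComponent.sound (adj_iotaG e f S hne hcS').reachable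
    rintro u v ⟨e', hcS', (⟨rfl, rfl⟩ | ⟨rfl, rfl⟩)⟩
    · exact key e' hcS'
    · exact (key e' hcS').symm
  have hKadj : ∀ u v, H2.Adj u v →
      H.connectedComponentMk (iotaK G u) = H.connectedComponentMk (iotaK G v) := by
    have key : ∀ f' : K.E, K.col f' ∈ S →
        H.connectedComponentMk (iotaK G (.inl (K.src f'))) =
          H.connectedComponentMk (iotaK G (.inr (K.tgt f'))) := by
      intro f' hcS'
      have hnf : f' ≠ f := by
        intro h
        rw [h, hcf] at hcS'
        exact hcnS hcS'
      exact SimpleGraph.ConnectedComponent.sound (adj_iotaK e f S hnf hcS').reachable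
    rintro u v ⟨f', hcS', (⟨rfl, rfl⟩ | ⟨rfl, rfl⟩)⟩
    · exact key f' hcS'
    · exact (key f' hcS').symm
  have hψinv : ∀ u v, H.Adj u v → proj0 G K S u = proj0 G K S v := by
    have key : ∀ x : (connSum G K e f).E, (connSum G K e f).col x ∈ S →
        proj0 G K S (Sum.inl ((connSum G K e f).src x)) =
          proj0 G K S (Sum.inr ((connSum G K e f).tgt x)) := by
      rintro (⟨e', hne⟩ | (⟨f', hnf⟩ | b)) hxc
      · exact congrArg Sum.inl
          (SimpleGraph.ConnectedComponent.sound
            (SimpleGraph.Adj.reachable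
              (⟨e', hxc, Or.inl ⟨rfl, rfl⟩⟩ :
                H1.Adj (Sum.inl (G.src e')) (Sum.inr (G.tgt e')))))
      · exact congrArg Sum.inr
          (SimpleGraph.ConnectedComponent.sound
            (SimpleGraph.Adj.reachable
              (⟨f', hxc, Or.inl ⟨rfl, rfl⟩⟩ :
                H2.Adj (Sum.inl (K.src f')) (Sum.inr (K.tgt f')))))
      · exact absurd (hce ▸ hxc) hcnS
    rintro u v ⟨x, hxc, (⟨rfl, rfl⟩ | ⟨rfl, rfl⟩)⟩
    · exact key x hxc
    · exact (key x hxc).symm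
  refine card_split
    (Sum.elim (ccLift H1 (fun v => H.connectedComponentMk (iotaG K v)) hGadj)
      (ccLift H2 (fun v => H.connectedComponentMk (iotaK G v)) hKadj))
    (ccLift H (proj0 G K S) hψinv) ?_ ?_
  · rintro (x | x)
    · induction x using SimpleGraph.ConnectedComponent.ind with
      | _ v => cases v <;> rfl
    · induction x using SimpleGraph.ConnectedComponent.ind with
      | _ v => cases v <;> rfl
  · intro cc
    induction cc using SimpleGraph.ConnectedComponent.ind with
    | _ v => rcases v with (w | w) | (b | b) <;> rfl

end Main

/-- Under the connected sum along two edges of the same color `c`,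
for each color `d ≠ c` the `(c,d)`-bicolored cycle through `e` and the one through `f`
merge into a single face, all other faces are unaffected, and hence
`|(G #_{e,f} K)⁽²⁾| = |G⁽²⁾| + |K⁽²⁾| - D`. -/
theorem facesCount_connSum (D : ℕ) (G K : PreGraph (D+1))
    (hGreg : G.Regular) (hKreg : K.Regular)
    (hGconn : G.Connected) (hKconn : K.Connected)
    (e : G.E) (f : K.E) (hcol : G.col e = K.col f) :
    (∀ d : Fin (D+1), d ≠ G.col e →
        (connSum G K e f).facesCount (G.col e) d + 1 =
          G.facesCount (G.col e) d + K.facesCount (K.col f) d) ∧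
    (∀ i j : Fin (D+1), i ≠ G.col e → j ≠ G.col e →
        (connSum G K e f).facesCount i j = G.facesCount i j + K.facesCount i j) ∧
    (connSum G K e f).totalFaces + D = G.totalFaces + K.totalFaces := by
  classical
  have hmem : ∀ d : Fin (D+1), d ≠ G.col e →
      (connSum G K e f).facesCount (G.col e) d + 1 =
        G.facesCount (G.col e) d + K.facesCount (K.col f) d := by
    intro d hd
    rw [← hcol]
    exact connSum_facesCount_mem G K hGreg hKreg e f rfl hcol.symm hd
  have hnot : ∀ i j : Fin (D+1), i ≠ G.col e → j ≠ G.col e →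
      (connSum G K e f).facesCount i j = G.facesCount i j + K.facesCount i j :=
    fun i j hi hj => connSum_facesCount_not_mem G K e f rfl hcol.symm hi hj
  refine ⟨hmem, hnot, ?_⟩
  simp only [PreGraph.totalFaces]
  have key : ∀ p ∈ Finset.univ.filter (fun p : Fin (D+1) × Fin (D+1) => p.1 < p.2),
      (connSum G K e f).facesCount p.1 p.2 +
        (if p.1 = G.col e ∨ p.2 = G.col e then 1 else 0) =
      G.facesCount p.1 p.2 + K.facesCount p.1 p.2 := by
    intro p hp
    rw [Finset.mem_filter] at hp
    have hlt := hp.2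
    have hne12 : p.1 ≠ p.2 := ne_of_lt hlt
    by_cases h1c : p.1 = G.col e
    · rw [if_pos (Or.inl h1c)]
      exact connSum_facesCount_mem G K hGreg hKreg e f h1c.symm
        (hcol.symm.trans h1c.symm) hne12.symm
    · by_cases h2c : p.2 = G.col e
      · rw [if_pos (Or.inr h2c)]
        rw [PreGraph.facesCount_comm (connSum G K e f), PreGraph.facesCount_comm G,
          PreGraph.facesCount_comm K]
        exact connSum_facesCount_mem G K hGreg hKreg e f h2c.symm
          (hcol.symm.trans h2c.symm) hne12
      · rw [if_neg (by tauto), add_zero]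
        exact connSum_facesCount_not_mem G K e f rfl hcol.symm h1c h2c
  have hsum := Finset.sum_congr rfl key
  rw [Finset.sum_add_distrib] at hsum
  have hDcard : (∑ p ∈ Finset.univ.filter (fun p : Fin (D+1) × Fin (D+1) => p.1 < p.2),
      (if p.1 = G.col e ∨ p.2 = G.col e then 1 else 0)) = D := by
    rw [Finset.sum_boole]
    simp only [Nat.cast_id]
    have hcard : ((Finset.univ.filter (fun p : Fin (D+1) × Fin (D+1) => p.1 < p.2)).filter
        (fun p => p.1 = G.col e ∨ p.2 = G.col e)).card =
        (Finset.univ.erase (G.col e)).card := by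
      refine Finset.card_nbij' (fun p => if p.1 = G.col e then p.2 else p.1)
        (fun x => if x < G.col e then (x, G.col e) else (G.col e, x)) ?_ ?_ ?_ ?_
      · intro p hp
        simp only [Finset.mem_coe, Finset.mem_filter, Finset.mem_univ, true_and] at hp
        dsimp only
        rw [Finset.mem_coe, Finset.mem_erase]
        refine ⟨?_, Finset.mem_univ _⟩
        split_ifs with h
        · exact fun hh => (ne_of_lt hp.1) (h.trans hh.symm)
        · exact h
      · intro x hx
        rw [Finset.mem_coe, Finset.mem_erase] at hx
        simp only [Finset.mem_coe, Finset.mem_filter, Finset.mem_univ, true_and]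
        split_ifs with h
        · exact ⟨h, Or.inr rfl⟩
        · exact ⟨lt_of_le_of_ne (not_lt.mp h) (fun hh => hx.1 hh.symm), Or.inl rfl⟩
      · intro p hp
        simp only [Finset.mem_coe, Finset.mem_filter, Finset.mem_univ, true_and] at hp
        dsimp only
        by_cases h : p.1 = G.col e
        · rw [if_pos h]
          have h2 : ¬ p.2 < G.col e := by
            rw [← h]
            exact asymm hp.1
          rw [if_neg h2]
          exact Prod.ext h.symm rfl
        · rw [if_neg h]
          rcases hp.2 with h1 | h2
          · exact absurd h1 h
          · have hlt2 : p.1 < G.col e := by rw [← h2]; exact hp.1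
            rw [if_pos hlt2]
            exact Prod.ext rfl h2.symm
      · intro x hx
        rw [Finset.mem_coe, Finset.mem_erase] at hx
        dsimp only
        by_cases h : x < G.col e
        · rw [if_pos h]
          rw [if_neg (show ¬ (x, G.col e).1 = G.col e from hx.1)]
        · rw [if_neg h]
          rw [if_pos (show (G.col e, x).1 = G.col e from rfl)]
    rw [hcard, Finset.card_erase_of_mem (Finset.mem_univ _), Finset.card_univ,
      Fintype.card_fin]
    omega
  rw [hDcard] at hsum
  rw [Finset.sum_add_distrib] at hsum
  exact hsum
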